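/- Let (G,τ) be a tree instance of RFTT with edge weights c, depot s, and tt-weights q(e) = min_{j ∈ D(e)} τ(j). Then every feasible periodic schedule J with period ℓ satisfies (1/ℓ) Σ_{k=1}^{ℓ} c(J(k)) ≥ 2 Σ_{e ∈ E} c(e)/q(e), where tour costs are taken in the shortest-path metric of G with depot s. -/

import Mathlib

open scoped BigOperators

/-- The unique path between `u` and `v` in a tree, as a walk. -/
noncomputable def treePath {α : Type*} {G : SimpleGraph α} (hG : G.IsTree) (u v : α) :
    G.Walk u v :=
  (hG.existsUnique_path u v).exists.choose

/-- The weighted shortest-path (tree) metric: the total weight of the unique path. -/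
noncomputable def treeDist {α : Type*} {G : SimpleGraph α} (hG : G.IsTree)
    (w : Sym2 α → ℝ) (u v : α) : ℝ :=
  ((treePath hG u v).edges.map w).sum

/-- The cost of the route `s, v₁, …, v_r, s` where `l = [v₁, …, v_r]`. -/
def routeLen {X : Type*} (d : X → X → ℝ) (s : X) (l : List X) : ℝ :=
  (List.zip (s :: l) (l ++ [s])).foldr (fun p acc => d p.1 p.2 + acc) 0

/-- The tour cost of a finite set `S`: the minimum over all orderings `v₁,…,v_r` of the
elements of `S` of `d s v₁ + ∑ d vᵢ vᵢ₊₁ + d v_r s`, with `c ∅ = 0`. -/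
noncomputable def tourCost {X : Type*} [DecidableEq X] (d : X → X → ℝ) (s : X)
    (S : Finset X) : ℝ :=
  if S = ∅ then 0
  else sInf {x : ℝ | ∃ l : List X, l.Nodup ∧ l.toFinset = S ∧ x = routeLen d s l}

/-- Feasibility for a rooted tree instance with depot `s`: every vertex `v ≠ s`
(i.e. every client) is visited in every window of `τ v` consecutive days. -/
def FeasibleTree {α : Type*} (s : α) (τ : α → ℕ) (J : ℕ → Finset α) : Prop :=
  ∀ v : α, v ≠ s → ∀ t : ℕ, ∃ k : ℕ, t < k ∧ k ≤ t + τ v ∧ v ∈ J k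

/-- The tt-weight `q(e) = min_{j ∈ D(e)} τ j` of an edge `e` of the tree rooted at the
depot `s`, where `D(e)` is the set of clients `j` lying below `e`, i.e. those `j ≠ s`
such that `e` lies on the path from `s` to `j`. -/
noncomputable def ttWeight {α : Type*} {G : SimpleGraph α} (hG : G.IsTree) (s : α)
    (τ : α → ℕ) (e : Sym2 α) : ℕ :=
  sInf {m : ℕ | ∃ j : α, j ≠ s ∧ e ∈ (treePath hG s j).edges ∧ m = τ j}

set_option linter.unusedSectionVars false

open SimpleGraph

section TreeLemmas
variable {α : Type*} [DecidableEq α] {G : SimpleGraph α} (hG : G.IsTree)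

lemma treePath_isPath (u v : α) : (treePath hG u v).IsPath :=
  (hG.existsUnique_path u v).exists.choose_spec

lemma treePath_unique {u v : α} (p : G.Walk u v) (hp : p.IsPath) : p = treePath hG u v :=
  (hG.existsUnique_path u v).unique hp (treePath_isPath hG u v)

lemma mem_treePath_iff (e : Sym2 α) (u v : α) :
    e ∈ (treePath hG u v).edges ↔ ¬ (G.deleteEdges {e}).Reachable u v := by
  constructor
  · intro hmem hreach
    obtain ⟨W⟩ := hreach
    have hbp : W.bypass.IsPath := W.bypass_isPath
    have hsub : ∀ e' ∈ W.bypass.edges, e' ∈ G.edgeSet := fun e' he' =>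
      ((G.edgeSet_deleteEdges {e}) ▸ W.bypass.edges_subset_edgeSet he').1
    have hT : (W.bypass.transfer G hsub).IsPath := hbp.transfer hsub
    have heq := treePath_unique hG _ hT
    rw [← heq, Walk.edges_transfer] at hmem
    have h2 : e ∈ (G.deleteEdges {e}).edgeSet := W.bypass.edges_subset_edgeSet hmem
    rw [edgeSet_deleteEdges] at h2
    exact h2.2 rfl
  · intro hreach
    by_contra hmem
    exact hreach ⟨(treePath hG u v).toDeleteEdges {e}
      (fun e' he' h1 => hmem (Set.mem_singleton_iff.1 h1 ▸ he'))⟩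

lemma not_mem_treePath_depot (s : α) (e : Sym2 α) : e ∉ (treePath hG s s).edges :=
  fun h => (mem_treePath_iff hG e s s).1 h (Reachable.refl s)

lemma crossing (s : α) {e : Sym2 α} {x y : α}
    (hxy : ¬ (e ∈ (treePath hG s x).edges ↔ e ∈ (treePath hG s y).edges)) :
    e ∈ (treePath hG x y).edges := by
  rw [mem_treePath_iff hG e s x, mem_treePath_iff hG e s y] at hxy
  rw [mem_treePath_iff]
  intro hr
  exact hxy (not_congr ⟨fun h => h.trans hr, fun h => h.trans hr.symm⟩)

lemma exists_below (s : α) {e : Sym2 α} (he : e ∈ G.edgeSet) :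
    ∃ j, j ≠ s ∧ e ∈ (treePath hG s j).edges := by
  have key : ∃ j, e ∈ (treePath hG s j).edges := by
    induction e with
    | _ a b =>
      have hb : G.IsBridge s(a, b) :=
        (isAcyclic_iff_forall_edge_isBridge.1 hG.IsAcyclic) he
      rw [isBridge_iff] at hb
      have hnr : ¬ (G.deleteEdges {s(a, b)}).Reachable a b := hb
      by_cases ha : s(a, b) ∈ (treePath hG s a).edges
      · exact ⟨a, ha⟩
      · refine ⟨b, ?_⟩
        rw [mem_treePath_iff] at ha ⊢
        rw [not_not] at ha
        exact fun hrb => hnr (ha.symm.trans hrb)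
  obtain ⟨j, hj⟩ := key
  refine ⟨j, ?_, hj⟩
  rintro rfl
  exact not_mem_treePath_depot hG j e hj

lemma treeDist_eq_sum [Fintype α] [DecidableRel G.Adj] (w : Sym2 α → ℝ) (x y : α) :
    treeDist hG w x y
      = ∑ e ∈ G.edgeFinset, (if e ∈ (treePath hG x y).edges then w e else 0) := by
  have hnd : (treePath hG x y).edges.Nodup := (treePath_isPath hG x y).isTrail.edges_nodup
  rw [treeDist, ← List.sum_toFinset w hnd]
  rw [show (∑ e ∈ G.edgeFinset, if e ∈ (treePath hG x y).edges then w e else 0)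
      = ∑ e ∈ G.edgeFinset, if e ∈ (treePath hG x y).edges.toFinset then w e else 0 by
    refine Finset.sum_congr rfl fun e _ => ?_
    simp [List.mem_toFinset]]
  rw [Finset.sum_ite_mem]
  congr 1
  refine (Finset.inter_eq_right.2 ?_).symm
  intro e hee
  rw [mem_edgeFinset]
  exact (treePath hG x y).edges_subset_edgeSet (List.mem_toFinset.1 hee)

end TreeLemmas

/-- The list of consecutive pairs of the route `x, l…, y`. -/
def rPairs {X : Type*} (x : X) (l : List X) (y : X) : List (X × X) :=
  List.zip (x :: l) (l ++ [y])

lemma rPairs_nil {X : Type*} (x y : X) : rPairs x [] y = [(x, y)] := rfl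

lemma rPairs_cons {X : Type*} (x a y : X) (t : List X) :
    rPairs x (a :: t) y = (x, a) :: rPairs a t y := rfl

lemma routeLen_eq_sum {X : Type*} (d : X → X → ℝ) (s : X) (l : List X) :
    routeLen d s l = ((rPairs s l s).map (fun p => d p.1 p.2)).sum := by
  rw [routeLen]
  show (rPairs s l s).foldr (fun p acc => d p.1 p.2 + acc) 0 = _
  induction rPairs s l s with
  | nil => simp
  | cons p t ih => simp [ih]

lemma list_sum_comm {X γ : Type*} (L : List X) (t : Finset γ) (g : γ → X → ℝ) :
    (L.map (fun p => ∑ e ∈ t, g e p)).sum = ∑ e ∈ t, (L.map (fun p => g e p)).sum := by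
  induction L with
  | nil => simp
  | cons a L ih => simp [ih, Finset.sum_add_distrib]

section Seg
variable {α : Type*} [DecidableEq α] {G : SimpleGraph α} (hG : G.IsTree)
variable (w : Sym2 α → ℝ) (s : α) (e : Sym2 α)

/-- The contribution of edge `e` to the route `x, l…, y`. -/
noncomputable def segSum (x : α) (l : List α) (y : α) : ℝ :=
  ((rPairs x l y).map
    (fun p => if e ∈ (treePath hG p.1 p.2).edges then w e else 0)).sum

lemma segSum_nonneg (hwe : 0 ≤ w e) (x : α) (l : List α) (y : α) :
    0 ≤ segSum hG w e x l y := by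
  apply List.sum_nonneg
  intro a ha
  obtain ⟨p, _, rfl⟩ := List.mem_map.1 ha
  split <;> simp [hwe]

lemma segSum_cons (x a y : α) (t : List α) :
    segSum hG w e x (a :: t) y
      = (if e ∈ (treePath hG x a).edges then w e else 0) + segSum hG w e a t y := by
  rw [segSum, rPairs_cons]; simp [segSum]

lemma segSum_one (hwe : 0 ≤ w e) :
    ∀ (l : List α) (x y : α),
      ¬ (e ∈ (treePath hG s x).edges ↔ e ∈ (treePath hG s y).edges) →
      w e ≤ segSum hG w e x l y := by
  intro l
  induction l with
  | nil =>
    intro x y hxy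
    rw [segSum, rPairs_nil]
    simp [crossing hG s hxy]
  | cons a t ih =>
    intro x y hxy
    rw [segSum_cons]
    by_cases h : e ∈ (treePath hG s x).edges ↔ e ∈ (treePath hG s a).edges
    · have h2 : ¬ (e ∈ (treePath hG s a).edges ↔ e ∈ (treePath hG s y).edges) :=
        fun hh => hxy (h.trans hh)
      have := ih a y h2
      have h3 : 0 ≤ (if e ∈ (treePath hG x a).edges then w e else 0) := by
        split <;> simp [hwe]
      linarith
    · rw [if_pos (crossing hG s h)]
      have := segSum_nonneg hG w e hwe a t y
      linarith

lemma segSum_two (hwe : 0 ≤ w e) :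
    ∀ (l : List α) (x y : α),
      e ∉ (treePath hG s x).edges → e ∉ (treePath hG s y).edges →
      (∃ v ∈ l, e ∈ (treePath hG s v).edges) →
      2 * w e ≤ segSum hG w e x l y := by
  intro l
  induction l with
  | nil => rintro x y _ _ ⟨v, hv, _⟩; simp at hv
  | cons a t ih =>
    rintro x y hx hy ⟨v, hv, hσv⟩
    rw [segSum_cons]
    by_cases ha : e ∈ (treePath hG s a).edges
    · have h1 : ¬ (e ∈ (treePath hG s x).edges ↔ e ∈ (treePath hG s a).edges) := by
        simp [hx, ha]
      have h2 : ¬ (e ∈ (treePath hG s a).edges ↔ e ∈ (treePath hG s y).edges) := by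
        simp [hy, ha]
      rw [if_pos (crossing hG s h1)]
      have := segSum_one hG w s e hwe t a y h2
      linarith
    · have hvt : v ∈ t := by
        rcases List.mem_cons.1 hv with rfl | h
        · exact absurd hσv ha
        · exact h
      have := ih a y ha hy ⟨v, hvt, hσv⟩
      have h3 : 0 ≤ (if e ∈ (treePath hG x a).edges then w e else 0) := by
        split <;> simp [hwe]
      linarith

end Seg

section Route
variable {α : Type*} [Fintype α] [DecidableEq α] {G : SimpleGraph α} [DecidableRel G.Adj]
variable (hG : G.IsTree) (w : Sym2 α → ℝ) (s : α)

lemma routeLen_lower (hw : ∀ e ∈ G.edgeSet, 0 ≤ w e) (l : List α) :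
    ∑ e ∈ G.edgeFinset, (if ∃ v ∈ l, e ∈ (treePath hG s v).edges then 2 * w e else 0)
      ≤ routeLen (treeDist hG w) s l := by
  rw [routeLen_eq_sum]
  have hswap : ((rPairs s l s).map (fun p => treeDist hG w p.1 p.2)).sum
      = ∑ e ∈ G.edgeFinset, segSum hG w e s l s := by
    rw [show ((rPairs s l s).map (fun p => treeDist hG w p.1 p.2))
        = ((rPairs s l s).map (fun p => ∑ e ∈ G.edgeFinset,
            (if e ∈ (treePath hG p.1 p.2).edges then w e else 0))) by
      apply List.map_congr_left
      intro p _
      exact treeDist_eq_sum hG w p.1 p.2]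
    rw [list_sum_comm]
    rfl
  rw [hswap]
  apply Finset.sum_le_sum
  intro e he
  have hwe : 0 ≤ w e := hw e (mem_edgeFinset.1 he)
  split_ifs with h
  · obtain ⟨v, hv, hσ⟩ := h
    exact segSum_two hG w s e hwe l s s
      (not_mem_treePath_depot hG s e) (not_mem_treePath_depot hG s e) ⟨v, hv, hσ⟩
  · exact segSum_nonneg hG w e hwe s l s

lemma tourCost_lower (hw : ∀ e ∈ G.edgeSet, 0 ≤ w e) (S : Finset α) :
    ∑ e ∈ G.edgeFinset, (if ∃ v ∈ S, e ∈ (treePath hG s v).edges then 2 * w e else 0)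
      ≤ tourCost (treeDist hG w) s S := by
  rw [tourCost]
  split_ifs with h
  · subst h
    simp
  · apply le_csInf
    · exact ⟨routeLen (treeDist hG w) s S.toList,
        S.toList, S.nodup_toList, S.toList_toFinset, rfl⟩
    · rintro x ⟨l, hnd, hl, rfl⟩
      refine le_trans (le_of_eq ?_) (routeLen_lower hG w s hw l)
      refine Finset.sum_congr rfl fun e _ => ?_
      refine if_congr ?_ rfl rfl
      constructor
      · rintro ⟨v, hv, hσ⟩
        exact ⟨v, by rw [← hl] at hv; exact List.mem_toFinset.1 hv, hσ⟩
      · rintro ⟨v, hv, hσ⟩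
        exact ⟨v, by rw [← hl]; exact List.mem_toFinset.2 hv, hσ⟩

end Route

section Count
variable {α : Type*} [DecidableEq α]

lemma J_shift (J : ℕ → Finset α) (ℓ : ℕ) (hper : ∀ k : ℕ, J (k + ℓ) = J k) :
    ∀ (n m : ℕ), J (m + n * ℓ) = J m := by
  intro n
  induction n with
  | zero => simp
  | succ n ih =>
    intro m
    have : m + (n + 1) * ℓ = (m + n * ℓ) + ℓ := by ring
    rw [this, hper, ih]

lemma periodic_count (J : ℕ → Finset α) (ℓ : ℕ) (hper : ∀ k : ℕ, J (k + ℓ) = J k)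
    (j : α) (n : ℕ) :
    ∑ k ∈ Finset.Ioc 0 (n * ℓ), (if j ∈ J k then (1 : ℕ) else 0)
      = n * ∑ k ∈ Finset.Ioc 0 ℓ, (if j ∈ J k then (1 : ℕ) else 0) := by
  induction n with
  | zero => simp
  | succ n ih =>
    have h2 : n * ℓ ≤ (n + 1) * ℓ := Nat.mul_le_mul_right ℓ (Nat.le_succ n)
    rw [← Finset.sum_Ioc_consecutive _ (Nat.zero_le (n * ℓ)) h2, ih]
    have hshift : ∑ k ∈ Finset.Ioc (n * ℓ) ((n + 1) * ℓ), (if j ∈ J k then (1 : ℕ) else 0)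
        = ∑ k ∈ Finset.Ioc 0 ℓ, (if j ∈ J k then (1 : ℕ) else 0) := by
      have hmap : Finset.Ioc (n * ℓ) ((n + 1) * ℓ)
          = (Finset.Ioc 0 ℓ).map (addLeftEmbedding (n * ℓ)) := by
        rw [Finset.map_add_left_Ioc]
        congr 1 <;> ring
      rw [hmap, Finset.sum_map]
      refine Finset.sum_congr rfl fun k _ => ?_
      have : J (n * ℓ + k) = J k := by
        rw [Nat.add_comm]
        exact J_shift J ℓ hper n k
      simp [addLeftEmbedding_apply, this]
    rw [hshift]
    ring

lemma feasible_count (J : ℕ → Finset α) (j : α) (q : ℕ)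
    (hvisit : ∀ t : ℕ, ∃ k : ℕ, t < k ∧ k ≤ t + q ∧ j ∈ J k) (m : ℕ) :
    m ≤ ∑ k ∈ Finset.Ioc 0 (m * q), (if j ∈ J k then (1 : ℕ) else 0) := by
  induction m with
  | zero => simp
  | succ m ih =>
    obtain ⟨k, hk1, hk2, hk3⟩ := hvisit (m * q)
    have hsplit : (m + 1) * q = m * q + q := by ring
    rw [hsplit, ← Finset.sum_Ioc_consecutive _ (Nat.zero_le (m * q)) (Nat.le_add_right _ q)]
    have h1 : 1 ≤ ∑ k ∈ Finset.Ioc (m * q) (m * q + q), (if j ∈ J k then (1 : ℕ) else 0) := by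
      calc 1 = (if j ∈ J k then (1 : ℕ) else 0) := by simp [hk3]
        _ ≤ _ := Finset.single_le_sum (f := fun i => if j ∈ J i then (1:ℕ) else 0) (fun i _ => Nat.zero_le _)
              (Finset.mem_Ioc.2 ⟨hk1, hk2⟩)
    omega

end Count

/-- Lower bound for the average tour length on trees: every feasible periodic schedule
has average tour cost at least `L(G,τ) = 2 ∑_e c(e)/q(e)`. -/
theorem tree_minAvg_lower_bound {α : Type*} [Fintype α] [DecidableEq α]
    {G : SimpleGraph α} [DecidableRel G.Adj] (hG : G.IsTree) (w : Sym2 α → ℝ)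
    (hw : ∀ e ∈ G.edgeSet, 0 ≤ w e) (s : α) (τ : α → ℕ)
    (hτ : ∀ v : α, v ≠ s → 1 ≤ τ v)
    (J : ℕ → Finset α) (ℓ : ℕ) (hℓ : 1 ≤ ℓ) (hper : ∀ k : ℕ, J (k + ℓ) = J k)
    (hfeas : FeasibleTree s τ J) :
    2 * ∑ e ∈ G.edgeFinset, w e / (ttWeight hG s τ e : ℝ) ≤
      (∑ k ∈ Finset.Icc 1 ℓ, tourCost (treeDist hG w) s (J k)) / (ℓ : ℝ) := by
  classical
  have hl0 : (0 : ℝ) < (ℓ : ℝ) := by exact_mod_cast Nat.lt_of_lt_of_le Nat.zero_lt_one hℓ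
  rw [le_div_iff₀ hl0]
  have hIcc : Finset.Icc 1 ℓ = Finset.Ioc 0 ℓ := by ext k; simp; omega
  rw [hIcc]
  -- the number of days in a period on which the tour crosses edge `e`
  set N : Sym2 α → ℕ := fun e =>
    ∑ k ∈ Finset.Ioc 0 ℓ, (if ∃ v ∈ J k, e ∈ (treePath hG s v).edges then 1 else 0)
    with hN
  have key : ∀ e ∈ G.edgeFinset, 2 * (w e / (ttWeight hG s τ e : ℝ)) * (ℓ : ℝ)
      ≤ (2 * w e) * (N e : ℝ) := by
    intro e he
    have heS : e ∈ G.edgeSet := SimpleGraph.mem_edgeFinset.1 he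
    have hwe : 0 ≤ w e := hw e heS
    have hMne : {m : ℕ | ∃ j : α, j ≠ s ∧ e ∈ (treePath hG s j).edges ∧ m = τ j}.Nonempty := by
      obtain ⟨j, hj1, hj2⟩ := exists_below hG s heS
      exact ⟨τ j, j, hj1, hj2, rfl⟩
    have hqmem : ttWeight hG s τ e ∈
        {m : ℕ | ∃ j : α, j ≠ s ∧ e ∈ (treePath hG s j).edges ∧ m = τ j} :=
      Nat.sInf_mem hMne
    obtain ⟨j, hjne, hjmem, hjq⟩ := hqmem
    have hq1 : 1 ≤ ttWeight hG s τ e := by rw [hjq]; exact hτ j hjne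
    set C : ℕ := ∑ k ∈ Finset.Ioc 0 ℓ, (if j ∈ J k then 1 else 0) with hC
    have hCN : C ≤ N e := by
      apply Finset.sum_le_sum
      intro k _
      by_cases hjk : j ∈ J k
      · simp only [if_pos hjk, if_pos (⟨j, hjk, hjmem⟩ :
          ∃ v ∈ J k, e ∈ (treePath hG s v).edges)]
        exact le_refl 1
      · simp [hjk]
    have hfc : ℓ ≤ ∑ k ∈ Finset.Ioc 0 (ℓ * τ j), (if j ∈ J k then (1 : ℕ) else 0) :=
      feasible_count J j (τ j) (hfeas j hjne) ℓ
    have hpc : ∑ k ∈ Finset.Ioc 0 (τ j * ℓ), (if j ∈ J k then (1 : ℕ) else 0) = τ j * C :=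
      periodic_count J ℓ hper j (τ j)
    have hlqC : ℓ ≤ ttWeight hG s τ e * C := by
      rw [hjq]
      rw [Nat.mul_comm ℓ (τ j)] at hfc
      omega
    have hlqN : (ℓ : ℝ) ≤ (ttWeight hG s τ e : ℝ) * (N e : ℝ) := by
      have : ℓ ≤ ttWeight hG s τ e * N e :=
        le_trans hlqC (Nat.mul_le_mul_left _ hCN)
      exact_mod_cast this
    have hq0 : (0 : ℝ) < (ttWeight hG s τ e : ℝ) := by exact_mod_cast hq1
    have hdivN : (ℓ : ℝ) / (ttWeight hG s τ e : ℝ) ≤ (N e : ℝ) := by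
      rw [div_le_iff₀ hq0]
      linarith [hlqN]
    calc 2 * (w e / (ttWeight hG s τ e : ℝ)) * (ℓ : ℝ)
        = (2 * w e) * ((ℓ : ℝ) / (ttWeight hG s τ e : ℝ)) := by ring
      _ ≤ (2 * w e) * (N e : ℝ) := by
          apply mul_le_mul_of_nonneg_left hdivN
          linarith
  calc 2 * (∑ e ∈ G.edgeFinset, w e / (ttWeight hG s τ e : ℝ)) * (ℓ : ℝ)
      = ∑ e ∈ G.edgeFinset, 2 * (w e / (ttWeight hG s τ e : ℝ)) * (ℓ : ℝ) := by
        rw [Finset.mul_sum, Finset.sum_mul]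
    _ ≤ ∑ e ∈ G.edgeFinset, (2 * w e) * (N e : ℝ) := Finset.sum_le_sum key
    _ = ∑ e ∈ G.edgeFinset, ∑ k ∈ Finset.Ioc 0 ℓ,
          (if ∃ v ∈ J k, e ∈ (treePath hG s v).edges then 2 * w e else 0) := by
        refine Finset.sum_congr rfl fun e _ => ?_
        rw [hN]
        push_cast
        rw [Finset.mul_sum]
        refine Finset.sum_congr rfl fun k _ => ?_
        split_ifs <;> simp
    _ = ∑ k ∈ Finset.Ioc 0 ℓ, ∑ e ∈ G.edgeFinset,
          (if ∃ v ∈ J k, e ∈ (treePath hG s v).edges then 2 * w e else 0) :=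
        Finset.sum_comm
    _ ≤ ∑ k ∈ Finset.Ioc 0 ℓ, tourCost (treeDist hG w) s (J k) :=
        Finset.sum_le_sum fun k _ => tourCost_lower hG w s hw (J k)
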